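/- For each fixed natural number r ≥ 0, as n → ∞, the sum over integer tuples 1 < j_1 < j_2 < ... < j_{r+1} < n of the product 1/j_1 · 1/(j_2-j_1) ··· 1/(j_{r+1}-j_r) · 1/(n-j_{r+1}) is asymptotic to (r+2)(ln n)^{r+1}/n. -/

import Mathlib

open Asymptotics Filter

noncomputable def AA : ℕ → ℕ → ℝ
  | 0, n => 1 / (n : ℝ)
  | (k+1), n => ∑ m ∈ Finset.Ioo 0 n, AA k m * (1 / ((n : ℝ) - (m : ℝ)))

noncomputable def PP (k n : ℕ) : ℝ := ∑ m ∈ Finset.Ioo 0 n, AA k m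

lemma AA_zero (n : ℕ) : AA 0 n = 1 / (n : ℝ) := rfl

lemma AA_succ (k n : ℕ) : AA (k+1) n = ∑ m ∈ Finset.Ioo 0 n, AA k m * (1 / ((n : ℝ) - (m : ℝ))) := rfl

lemma Ioo01 : Finset.Ioo 0 1 = (∅ : Finset ℕ) := rfl

lemma AA_succ_one (k : ℕ) : AA (k+1) 1 = 0 := by rw [AA_succ, Ioo01, Finset.sum_empty]

lemma AA_nonneg (k n : ℕ) : 0 ≤ AA k n := by
  induction k generalizing n with
  | zero => exact div_nonneg zero_le_one (Nat.cast_nonneg n)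
  | succ k ih =>
    rw [AA_succ]
    refine Finset.sum_nonneg fun m hm => ?_
    rw [Finset.mem_Ioo] at hm
    have h2 : (m:ℝ) < n := by exact_mod_cast hm.2
    have h3 : (0:ℝ) < (n:ℝ) - m := by linarith
    exact mul_nonneg (ih m) (by positivity)

lemma PP_nonneg (k n : ℕ) : 0 ≤ PP k n :=
  Finset.sum_nonneg fun m _ => AA_nonneg k m

lemma reflect (n : ℕ) : ∑ m ∈ Finset.Ioo 0 n, 1 / ((n:ℝ) - m) = ∑ m ∈ Finset.Ioo 0 n, 1 / (m:ℝ) := by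
  refine Finset.sum_nbij' (fun m => n - m) (fun m => n - m) ?_ ?_ ?_ ?_ ?_
  · intro m hm; simp only [Finset.mem_Ioo] at hm ⊢; omega
  · intro m hm; simp only [Finset.mem_Ioo] at hm ⊢; omega
  · intro m hm; simp only [Finset.mem_Ioo] at hm; omega
  · intro m hm; simp only [Finset.mem_Ioo] at hm; omega
  · intro m hm; rw [Finset.mem_Ioo] at hm
    congr 1
    rw [Nat.cast_sub hm.2.le]

/-- the sum-swap lemma -/
lemma swap_lemma (f : ℕ → ℝ) (n : ℕ) :
    ∑ m ∈ Finset.Ioo 0 n, (∑ l ∈ Finset.Ioo 0 m, f l) * (1 / ((n:ℝ) - m)) =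
    ∑ s ∈ Finset.Ioo 0 n, ∑ l ∈ Finset.Ioo 0 s, f l * (1 / ((s:ℝ) - l)) := by
  rw [show (∑ s ∈ Finset.Ioo 0 n, ∑ l ∈ Finset.Ioo 0 s, f l * (1 / ((s:ℝ) - l))) =
      ∑ p ∈ (Finset.Ioo 0 n).sigma (fun s => Finset.Ioo 0 s), f p.2 * (1 / ((p.1:ℝ) - p.2))
    from Finset.sum_sigma' (Finset.Ioo 0 n) (fun s => Finset.Ioo 0 s)
      (fun s l => f l * (1 / ((s:ℝ) - l)))]
  have h : ∑ m ∈ Finset.Ioo 0 n, (∑ l ∈ Finset.Ioo 0 m, f l) * (1 / ((n:ℝ) - m)) =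
      ∑ p ∈ (Finset.Ioo 0 n).sigma (fun m => Finset.Ioo 0 m),
        f p.2 * (1 / ((n:ℝ) - p.1)) := by
    rw [Finset.sum_sigma]
    exact Finset.sum_congr rfl fun m hm => by rw [Finset.sum_mul]
  rw [h]
  refine Finset.sum_nbij' (fun p => ⟨n - p.1 + p.2, p.2⟩) (fun p => ⟨n - p.1 + p.2, p.2⟩) ?_ ?_ ?_ ?_ ?_
  · intro p hp
    simp only [Finset.mem_sigma, Finset.mem_Ioo] at hp ⊢
    omega
  · intro p hp
    simp only [Finset.mem_sigma, Finset.mem_Ioo] at hp ⊢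
    omega
  · rintro ⟨m, l⟩ hp
    simp only [Finset.mem_sigma, Finset.mem_Ioo] at hp
    show (⟨n - (n - m + l) + l, l⟩ : Σ _ : ℕ, ℕ) = ⟨m, l⟩
    have h2 : n - (n - m + l) + l = m := by omega
    rw [h2]
  · rintro ⟨m, l⟩ hp
    simp only [Finset.mem_sigma, Finset.mem_Ioo] at hp
    show (⟨n - (n - m + l) + l, l⟩ : Σ _ : ℕ, ℕ) = ⟨m, l⟩
    have h2 : n - (n - m + l) + l = m := by omega
    rw [h2]
  · intro p hp
    simp only [Finset.mem_sigma, Finset.mem_Ioo] at hp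
    have h1 : p.1 < n := hp.1.2
    have h2 : p.2 < p.1 := hp.2.2
    congr 2
    have : ((n - p.1 + p.2 : ℕ) : ℝ) = (n:ℝ) - p.1 + p.2 := by
      push_cast [Nat.cast_sub h1.le]
      ring
    rw [this]
    ring

lemma swap_lemma' (k n : ℕ) :
    ∑ m ∈ Finset.Ioo 0 n, (PP k m) * (1 / ((n:ℝ) - m)) = PP (k+1) n := by
  rw [PP]
  have : ∀ s ∈ Finset.Ioo 0 n, AA (k+1) s = ∑ l ∈ Finset.Ioo 0 s, AA k l * (1 / ((s:ℝ) - l)) :=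
    fun s _ => AA_succ k s
  rw [Finset.sum_congr rfl this, ← swap_lemma (AA k) n]
  rfl

lemma nAA (k : ℕ) : ∀ n : ℕ, (n:ℝ) * AA (k+1) n = ((k:ℝ)+2) * PP k n := by
  induction k with
  | zero =>
    intro n
    rw [AA_succ, Finset.mul_sum]
    have step : ∀ m ∈ Finset.Ioo 0 n,
        (n:ℝ) * (AA 0 m * (1 / ((n:ℝ) - m))) = 1/(m:ℝ) + 1/((n:ℝ) - m) := by
      intro m hm
      rw [Finset.mem_Ioo] at hm
      have h1 : (0:ℝ) < m := by exact_mod_cast hm.1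
      have h2 : (m:ℝ) < n := by exact_mod_cast hm.2
      rw [AA_zero]
      have h3 : (n:ℝ) - m ≠ 0 := by linarith
      field_simp
      ring
    rw [Finset.sum_congr rfl step, Finset.sum_add_distrib, reflect]
    have hPP : PP 0 n = ∑ m ∈ Finset.Ioo 0 n, 1 / (m:ℝ) :=
      Finset.sum_congr rfl (fun m _ => rfl)
    rw [hPP]
    push_cast
    ring
  | succ k ih =>
    intro n
    rw [AA_succ, Finset.mul_sum]
    have step : ∀ m ∈ Finset.Ioo 0 n,
        (n:ℝ) * (AA (k+1) m * (1 / ((n:ℝ) - m))) =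
        ((k:ℝ)+2) * ((PP k m) * (1 / ((n:ℝ) - m))) + AA (k+1) m := by
      intro m hm
      rw [Finset.mem_Ioo] at hm
      have h2 : (m:ℝ) < n := by exact_mod_cast hm.2
      have h3 : (n:ℝ) - m ≠ 0 := by linarith
      have key : (n:ℝ) * (AA (k+1) m * (1 / ((n:ℝ) - m))) =
          ((m:ℝ) * AA (k+1) m) * (1 / ((n:ℝ) - m)) + AA (k+1) m := by
        field_simp
        ring
      rw [key, ih m]
      ring
    rw [Finset.sum_congr rfl step, Finset.sum_add_distrib, ← Finset.mul_sum, swap_lemma']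
    have : ∑ m ∈ Finset.Ioo 0 n, AA (k+1) m = PP (k+1) n := rfl
    rw [this]
    push_cast
    ring

lemma tendsto_logpow (j : ℕ) :
    Tendsto (fun n : ℕ => (Real.log n) ^ (j+1) / ((j:ℝ)+1)) atTop atTop := by
  apply Tendsto.atTop_div_const (by positivity)
  exact (tendsto_pow_atTop (Nat.succ_ne_zero j)).comp
    (Real.tendsto_log_atTop.comp tendsto_natCast_atTop_atTop)

lemma hasDerivAt_F (j : ℕ) {x : ℝ} (hx : 0 < x) :
    HasDerivAt (fun y : ℝ => (Real.log y)^(j+1)/((j:ℝ)+1)) ((Real.log x)^j / x) x := by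
  have h := ((Real.hasDerivAt_log hx.ne').pow (j+1)).div_const ((j:ℝ)+1)
  have hj : (j:ℝ) + 1 ≠ 0 := by positivity
  refine h.congr_deriv ?_
  rw [Nat.add_sub_cancel]
  push_cast
  field_simp

lemma continuousOn_flog (j : ℕ) {a b : ℝ} (ha : 0 < a) :
    ContinuousOn (fun x : ℝ => (Real.log x)^j / x) (Set.Icc a b) := by
  intro x hx
  have hx0 : x ≠ 0 := by
    have := hx.1
    intro h; rw [h] at this; linarith
  exact (((Real.continuousAt_log hx0).pow j).div continuousAt_id hx0).continuousWithinAt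

lemma integral_flog (j : ℕ) {a b : ℝ} (ha : 0 < a) (hab : a ≤ b) :
    ∫ x in a..b, (Real.log x)^j / x
      = (Real.log b)^(j+1)/((j:ℝ)+1) - (Real.log a)^(j+1)/((j:ℝ)+1) := by
  refine intervalIntegral.integral_eq_sub_of_hasDerivAt
    (f := fun y : ℝ => (Real.log y)^(j+1)/((j:ℝ)+1)) (fun x hx => ?_) ?_
  · rw [Set.uIcc_of_le hab] at hx
    exact hasDerivAt_F j (lt_of_lt_of_le ha hx.1)
  · apply ContinuousOn.intervalIntegrable
    rw [Set.uIcc_of_le hab]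
    exact continuousOn_flog j ha

lemma antitone_flog (j : ℕ) :
    AntitoneOn (fun x : ℝ => (Real.log x)^j / x) (Set.Ici (Real.exp j)) := by
  have hsub : Set.Ici (Real.exp j) ⊆ Set.Ioi (0:ℝ) := fun x hx =>
    lt_of_lt_of_le (Real.exp_pos j) hx
  have hint : interior (Set.Ici (Real.exp j)) = Set.Ioi (Real.exp j) := interior_Ici
  apply antitoneOn_of_deriv_nonpos (convex_Ici _)
  · intro x hx
    exact (((Real.continuousAt_log (hsub hx).ne').pow j).div continuousAt_id
      (hsub hx).ne').continuousWithinAt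
  · intro x hx
    rw [hint] at hx
    have hx0 : 0 < x := lt_trans (Real.exp_pos j) hx
    have hd : HasDerivAt (fun x : ℝ => (Real.log x)^j / x)
        (((j:ℝ) * (Real.log x)^(j-1) * x⁻¹ * x - (Real.log x)^j * 1) / x^2) x :=
      ((Real.hasDerivAt_log hx0.ne').pow j).div (hasDerivAt_id x) hx0.ne'
    exact hd.differentiableAt.differentiableWithinAt
  · intro x hx
    rw [hint] at hx
    have hx0 : 0 < x := lt_trans (Real.exp_pos j) hx
    have hd : HasDerivAt (fun x : ℝ => (Real.log x)^j / x)
        (((j:ℝ) * (Real.log x)^(j-1) * x⁻¹ * x - (Real.log x)^j * 1) / x^2) x :=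
      ((Real.hasDerivAt_log hx0.ne').pow j).div (hasDerivAt_id x) hx0.ne'
    rw [hd.deriv]
    have hL : (j:ℝ) ≤ Real.log x := by
      rw [← Real.log_exp (j:ℝ)]
      exact Real.log_le_log (Real.exp_pos _) hx.le
    have hLnn : (0:ℝ) ≤ Real.log x := le_trans (Nat.cast_nonneg j) hL
    have key : (j:ℝ) * (Real.log x)^(j-1) ≤ (Real.log x)^j := by
      cases j with
      | zero => simp
      | succ k =>
        have h1 : (Real.log x)^(k+1) = Real.log x * (Real.log x)^k := by ring
        have h2 : ((k:ℝ)+1) * (Real.log x)^k ≤ Real.log x * (Real.log x)^k := by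
          apply mul_le_mul_of_nonneg_right _ (pow_nonneg hLnn k)
          exact_mod_cast hL
        calc ((k+1:ℕ):ℝ) * (Real.log x)^(k+1-1) = ((k:ℝ)+1) * (Real.log x)^k := by
              push_cast; ring
          _ ≤ Real.log x * (Real.log x)^k := h2
          _ = (Real.log x)^(k+1) := h1.symm
    have hnum : (j:ℝ) * (Real.log x)^(j-1) * x⁻¹ * x - (Real.log x)^j * 1 ≤ 0 := by
      rw [mul_assoc ((j:ℝ) * (Real.log x)^(j-1)) x⁻¹ x, inv_mul_cancel₀ hx0.ne']
      simp only [mul_one]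
      linarith
    exact div_nonpos_of_nonpos_of_nonneg hnum (sq_nonneg x)

/-- L1: sum vs integral asymptotics -/
lemma sum_flog_equiv (j : ℕ) :
    (fun n : ℕ => ∑ m ∈ Finset.Ioo 0 n, (Real.log m)^j / m)
      ~[atTop] (fun n : ℕ => (Real.log n)^(j+1)/((j:ℝ)+1)) := by
  set f : ℝ → ℝ := fun x => (Real.log x)^j / x with hf
  set F : ℕ → ℝ := fun n => (Real.log n)^(j+1)/((j:ℝ)+1) with hF
  set M : ℕ := ⌈Real.exp j⌉₊ + 1 with hM
  have hMe : Real.exp j ≤ M := le_trans (Nat.le_ceil _) (by exact_mod_cast Nat.le_succ _)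
  have hM1 : 1 ≤ M := Nat.le_add_left 1 _
  have hM0 : (0:ℝ) < M := lt_of_lt_of_le (Real.exp_pos _) hMe
  have hfnonneg : ∀ m : ℕ, 1 ≤ m → 0 ≤ f m := by
    intro m hm
    have h1 : (1:ℝ) ≤ m := by exact_mod_cast hm
    have := Real.log_nonneg h1
    positivity
  have hc : (0:ℝ) ≤ (Real.log M)^(j+1)/((j:ℝ)+1) := by
    have h1 : (1:ℝ) ≤ M := by exact_mod_cast hM1
    have := Real.log_nonneg h1
    positivity
  have hC0 : (0:ℝ) ≤ ∑ m ∈ Finset.Ioo 0 M, f m :=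
    Finset.sum_nonneg fun m hm => hfnonneg m (Finset.mem_Ioo.mp hm).1
  have hfM : (0:ℝ) ≤ f M := hfnonneg M hM1
  -- bound for n > M
  have key : ∀ n : ℕ, M < n →
      |(∑ m ∈ Finset.Ioo 0 n, f m) - F n| ≤
        (∑ m ∈ Finset.Ioo 0 M, f m) + f M + (Real.log M)^(j+1)/((j:ℝ)+1) := by
    intro n hn
    have hn' : M ≤ n := hn.le
    have hsplit : ∑ m ∈ Finset.Ioo 0 n, f m
        = (∑ m ∈ Finset.Ioo 0 M, f m) + ∑ m ∈ Finset.Ico M n, f m := by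
      have e1 : Finset.Ioo 0 n = Finset.Ico 1 n := by ext x; simp; omega
      have e2 : Finset.Ioo 0 M = Finset.Ico 1 M := by ext x; simp; omega
      rw [e1, e2, ← Finset.sum_Ico_consecutive _ hM1 hn']
    have hanti : AntitoneOn f (Set.Icc (M:ℝ) (n:ℝ)) := by
      apply (antitone_flog j).mono
      intro x hx
      exact le_trans hMe hx.1
    have hMn : (M:ℝ) ≤ n := by exact_mod_cast hn'
    have hint : ∫ x in (M:ℝ)..(n:ℝ), f x = F n - (Real.log M)^(j+1)/((j:ℝ)+1) :=
      integral_flog j hM0 hMn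
    have hlow : ∫ x in (M:ℝ)..(n:ℝ), f x ≤ ∑ m ∈ Finset.Ico M n, f m :=
      AntitoneOn.integral_le_sum_Ico hn' hanti
    have hup : ∑ m ∈ Finset.Ico M n, f m ≤ f M + ∫ x in (M:ℝ)..(n:ℝ), f x := by
      have h1 : ∑ m ∈ Finset.Ico M n, f ((m : ℕ) + 1 : ℕ) ≤ ∫ x in (M:ℝ)..(n:ℝ), f x :=
        AntitoneOn.sum_le_integral_Ico hn' hanti
      have h2 : ∑ m ∈ Finset.Ico M n, f ((m:ℕ) + 1 : ℕ) = ∑ m ∈ Finset.Ico (M+1) (n+1), f m := by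
        rw [Finset.sum_Ico_eq_sum_range, Finset.sum_Ico_eq_sum_range]
        simp only [Nat.add_sub_add_right]
        apply Finset.sum_congr rfl
        intro i _
        congr 2
        omega
      have h3 : ∑ m ∈ Finset.Ico (M+1) n, f m ≤ ∑ m ∈ Finset.Ico (M+1) (n+1), f m := by
        apply Finset.sum_le_sum_of_subset_of_nonneg
        · exact Finset.Ico_subset_Ico le_rfl (Nat.le_succ n)
        · intro m hm _
          rw [Finset.mem_Ico] at hm
          exact hfnonneg m (le_trans (le_trans hM1 (Nat.le_succ M)) hm.1)
      have h4 : ∑ m ∈ Finset.Ico M n, f m = f M + ∑ m ∈ Finset.Ico (M+1) n, f m :=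
        Finset.sum_eq_sum_Ico_succ_bot hn (fun m : ℕ => f m)
      rw [h4]
      have := le_trans h3 (h2 ▸ h1)
      linarith
    rw [hsplit, hint] at *
    rw [abs_le]
    constructor <;> linarith
  -- conclude
  have hbigO : (fun n : ℕ => (∑ m ∈ Finset.Ioo 0 n, f m) - F n) =O[atTop]
      (fun _ : ℕ => (1:ℝ)) := by
    rw [Asymptotics.isBigO_iff]
    refine ⟨(∑ m ∈ Finset.Ioo 0 M, f m) + f M + (Real.log M)^(j+1)/((j:ℝ)+1), ?_⟩
    filter_upwards [eventually_gt_atTop M] with n hn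
    rw [Real.norm_eq_abs, norm_one, mul_one]
    exact key n hn
  have hlit : (fun _ : ℕ => (1:ℝ)) =o[atTop] F := by
    rw [Asymptotics.isLittleO_const_left]
    right
    have : Tendsto F atTop atTop := tendsto_logpow j
    exact tendsto_abs_atTop_atTop.comp this
  exact (hbigO.trans_isLittleO hlit).isEquivalent

open Classical in
noncomputable def FF (r : ℕ) (n : ℕ) : ℝ :=
  ∑ j ∈ (Fintype.piFinset fun _ : Fin (r + 1) => Finset.Ioo 1 n).filter StrictMono,
    (1 / (j 0 : ℝ)) * (∏ i : Fin r, 1 / ((j i.succ : ℝ) - (j i.castSucc : ℝ)))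
      * (1 / ((n : ℝ) - (j (Fin.last r) : ℝ)))

lemma strictMono_snoc {r : ℕ} (j' : Fin (r+1) → ℕ) (m : ℕ) (h : StrictMono j')
    (hlt : ∀ i, j' i < m) : StrictMono (Fin.snoc j' m) := by
  intro a b hab
  rcases Fin.eq_castSucc_or_eq_last b with ⟨b', rfl⟩ | rfl
  · rcases Fin.eq_castSucc_or_eq_last a with ⟨a', rfl⟩ | rfl
    · rw [Fin.snoc_castSucc, Fin.snoc_castSucc]
      exact h (Fin.castSucc_lt_castSucc_iff.mp hab)
    · exact absurd hab (Fin.castSucc_lt_last b').asymm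
  · rcases Fin.eq_castSucc_or_eq_last a with ⟨a', rfl⟩ | rfl
    · rw [Fin.snoc_castSucc, Fin.snoc_last]
      exact hlt a'
    · exact absurd hab (lt_irrefl _)

open Classical in
lemma FF_zero (n : ℕ) : FF 0 n = ∑ m ∈ Finset.Ioo 1 n, (1/(m:ℝ)) * (1/((n:ℝ) - m)) := by
  rw [FF]
  have hfilter : (Fintype.piFinset fun _ : Fin 1 => Finset.Ioo 1 n).filter StrictMono
      = Fintype.piFinset fun _ : Fin 1 => Finset.Ioo 1 n := by
    apply Finset.filter_true_of_mem
    intro j _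
    letI : Subsingleton (Fin (0+1)) := Fin.subsingleton_one
    exact Subsingleton.strictMono j
  rw [hfilter]
  refine Finset.sum_nbij' (fun j => j 0) (fun m => fun _ => m) ?_ ?_ ?_ ?_ ?_
  · intro j hj
    rw [Fintype.mem_piFinset] at hj
    exact hj 0
  · intro m hm
    rw [Fintype.mem_piFinset]
    intro _
    exact hm
  · intro j hj
    funext i
    rw [Fin.fin_one_eq_zero i]
  · intro m hm
    rfl
  · intro j hj
    have h0 : Fin.last 0 = 0 := rfl
    rw [h0]
    simp

open Classical in
lemma FF_succ (r n : ℕ) :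
    FF (r+1) n = ∑ m ∈ Finset.Ioo 1 n, FF r m * (1/((n:ℝ) - m)) := by
  have hexp : ∀ m ∈ Finset.Ioo 1 n, FF r m * (1/((n:ℝ) - m)) =
      ∑ j' ∈ (Fintype.piFinset fun _ : Fin (r + 1) => Finset.Ioo 1 m).filter StrictMono,
        ((1 / (j' 0 : ℝ)) * (∏ i : Fin r, 1 / ((j' i.succ : ℝ) - (j' i.castSucc : ℝ)))
          * (1 / ((m : ℝ) - (j' (Fin.last r) : ℝ)))) * (1/((n:ℝ) - m)) := by
    intro m _
    rw [FF, Finset.sum_mul]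
  rw [Finset.sum_congr rfl hexp]
  rw [Finset.sum_sigma' (Finset.Ioo 1 n)
    (fun m => (Fintype.piFinset fun _ : Fin (r + 1) => Finset.Ioo 1 m).filter StrictMono)
    (fun m j' => ((1 / (j' 0 : ℝ)) * (∏ i : Fin r, 1 / ((j' i.succ : ℝ) - (j' i.castSucc : ℝ)))
          * (1 / ((m : ℝ) - (j' (Fin.last r) : ℝ)))) * (1/((n:ℝ) - m)))]
  rw [FF]
  refine (Finset.sum_nbij' (fun p => Fin.snoc p.2 p.1)
    (fun j => ⟨j (Fin.last (r+1)), Fin.init j⟩) ?_ ?_ ?_ ?_ ?_).symm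
  · -- forward mem
    rintro ⟨m, j'⟩ hp
    simp only [Finset.mem_sigma, Finset.mem_filter, Fintype.mem_piFinset, Finset.mem_Ioo] at hp ⊢
    obtain ⟨hm, hj', hmono⟩ := hp
    refine ⟨?_, ?_⟩
    · intro i
      rcases Fin.eq_castSucc_or_eq_last i with ⟨i', rfl⟩ | rfl
      · rw [Fin.snoc_castSucc]
        exact ⟨(hj' i').1, lt_trans (hj' i').2 hm.2⟩
      · rw [Fin.snoc_last]
        exact hm
    · exact strictMono_snoc j' m hmono (fun i => (hj' i).2)
  · -- backward mem
    intro j hj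
    simp only [Finset.mem_filter, Fintype.mem_piFinset, Finset.mem_Ioo] at hj
    obtain ⟨hj, hmono⟩ := hj
    simp only [Finset.mem_sigma, Finset.mem_filter, Fintype.mem_piFinset, Finset.mem_Ioo]
    refine ⟨hj _, fun i => ⟨(hj _).1, ?_⟩, ?_⟩
    · exact hmono (Fin.castSucc_lt_last i)
    · exact hmono.comp Fin.strictMono_castSucc
  · -- left inverse
    rintro ⟨m, j'⟩ hp
    simp
  · -- right inverse
    intro j hj
    exact Fin.snoc_init_self j
  · -- term equality
    rintro ⟨m, j'⟩ hp
    simp only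
    have h0 : (Fin.snoc j' m : Fin (r+2) → ℕ) (0 : Fin (r+2)) = j' 0 := by
      rw [show (0 : Fin (r+2)) = Fin.castSucc 0 from rfl, Fin.snoc_castSucc]
    have hlast : (Fin.snoc j' m : Fin (r+2) → ℕ) (Fin.last (r+1)) = m := Fin.snoc_last _ _
    have hprod : (∏ i : Fin (r+1),
          1 / (((Fin.snoc j' m : Fin (r+2) → ℕ) i.succ : ℝ)
            - ((Fin.snoc j' m : Fin (r+2) → ℕ) i.castSucc : ℝ)))
        = (∏ i : Fin r, 1 / ((j' i.succ : ℝ) - (j' i.castSucc : ℝ)))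
            * (1 / ((m:ℝ) - (j' (Fin.last r) : ℝ))) := by
      rw [Fin.prod_univ_castSucc]
      congr 1
      · apply Finset.prod_congr rfl
        intro i _
        rw [Fin.succ_castSucc, Fin.snoc_castSucc, Fin.snoc_castSucc]
      · rw [Fin.succ_last, Fin.snoc_last, Fin.snoc_castSucc]
    rw [h0, hlast, hprod]
    ring

lemma sum_e_littleo (e g : ℕ → ℝ) (hg : ∀ m, 0 ≤ g m) (h : e =o[atTop] g)
    (hS : Tendsto (fun n => ∑ m ∈ Finset.Ioo 0 n, g m) atTop atTop) :
    (fun n => ∑ m ∈ Finset.Ioo 0 n, e m) =o[atTop] (fun n => ∑ m ∈ Finset.Ioo 0 n, g m) := by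
  rw [isLittleO_iff]
  intro ε hε
  obtain ⟨N, hN⟩ := eventually_atTop.mp (h.def (half_pos hε))
  set C := ∑ m ∈ Finset.Ioo 0 (N+1), |e m| with hC
  have hCnn : 0 ≤ C := Finset.sum_nonneg fun _ _ => abs_nonneg _
  have hSnn : ∀ n, 0 ≤ ∑ m ∈ Finset.Ioo 0 n, g m :=
    fun n => Finset.sum_nonneg fun m _ => hg m
  filter_upwards [eventually_ge_atTop (N+1), hS.eventually_ge_atTop (C / (ε/2))] with n hn hSn
  have hsplit : ∑ m ∈ Finset.Ioo 0 n, |e m|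
      = (∑ m ∈ Finset.Ioo 0 (N+1), |e m|) + ∑ m ∈ Finset.Ico (N+1) n, |e m| := by
    have e1 : Finset.Ioo 0 n = Finset.Ico 1 n := by ext x; simp; omega
    have e2 : Finset.Ioo 0 (N+1) = Finset.Ico 1 (N+1) := by ext x; simp; omega
    rw [e1, e2, ← Finset.sum_Ico_consecutive _ (by omega : 1 ≤ N+1) hn]
  have habs : |∑ m ∈ Finset.Ioo 0 n, e m| ≤ ∑ m ∈ Finset.Ioo 0 n, |e m| :=
    Finset.abs_sum_le_sum_abs _ _
  have htail : ∑ m ∈ Finset.Ico (N+1) n, |e m| ≤ (ε/2) * ∑ m ∈ Finset.Ioo 0 n, g m := by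
    calc ∑ m ∈ Finset.Ico (N+1) n, |e m| ≤ ∑ m ∈ Finset.Ico (N+1) n, (ε/2) * g m := by
          apply Finset.sum_le_sum
          intro m hm
          rw [Finset.mem_Ico] at hm
          have := hN m (by omega)
          rwa [Real.norm_eq_abs, Real.norm_eq_abs, abs_of_nonneg (hg m)] at this
      _ = (ε/2) * ∑ m ∈ Finset.Ico (N+1) n, g m := by rw [Finset.mul_sum]
      _ ≤ (ε/2) * ∑ m ∈ Finset.Ioo 0 n, g m := by
          apply mul_le_mul_of_nonneg_left _ (le_of_lt (half_pos hε))
          apply Finset.sum_le_sum_of_subset_of_nonneg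
          · intro x hx
            rw [Finset.mem_Ico] at hx
            rw [Finset.mem_Ioo]
            omega
          · intro m _ _
            exact hg m
  have hhead : C ≤ (ε/2) * ∑ m ∈ Finset.Ioo 0 n, g m := by
    rw [div_le_iff₀ (half_pos hε)] at hSn
    linarith [hSn]
  rw [Real.norm_eq_abs, Real.norm_eq_abs, abs_of_nonneg (hSnn n)]
  calc |∑ m ∈ Finset.Ioo 0 n, e m| ≤ ∑ m ∈ Finset.Ioo 0 n, |e m| := habs
    _ = C + ∑ m ∈ Finset.Ico (N+1) n, |e m| := hsplit
    _ ≤ (ε/2) * (∑ m ∈ Finset.Ioo 0 n, g m) + (ε/2) * (∑ m ∈ Finset.Ioo 0 n, g m) := by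
        linarith
    _ = ε * ∑ m ∈ Finset.Ioo 0 n, g m := by ring

lemma PP_equiv : ∀ k : ℕ, (fun n : ℕ => PP k n) ~[atTop] (fun n : ℕ => (Real.log n)^(k+1)) := by
  intro k
  induction k with
  | zero =>
    have h1 : (fun n : ℕ => PP 0 n) = (fun n : ℕ => ∑ m ∈ Finset.Ioo 0 n, (Real.log m)^0 / m) := by
      funext n
      exact Finset.sum_congr rfl fun m _ => by rw [AA_zero, pow_zero]
    rw [h1]
    apply (sum_flog_equiv 0).trans_eventuallyEq
    apply Filter.EventuallyEq.of_eq
    funext n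
    norm_num
  | succ k ih =>
    have hL : (fun m : ℕ => (Real.log m)^(k+1)) = fun m : ℕ => (Real.log m)^(k+1) := rfl
    set g : ℕ → ℝ := fun m => (Real.log m)^(k+1) / m with hg
    set e : ℕ → ℝ := fun m => PP k m / m - g m with he
    have hgnn : ∀ m, 0 ≤ g m := by
      intro m
      rcases Nat.eq_zero_or_pos m with rfl | hm
      · simp [hg]
      · have h1 : (1:ℝ) ≤ m := by exact_mod_cast hm
        have h2 := Real.log_nonneg h1
        have h3 : (0:ℝ) ≤ (Real.log m)^(k+1) := by positivity
        have h4 : (0:ℝ) ≤ (m:ℝ) := Nat.cast_nonneg m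
        exact div_nonneg h3 h4
    have hrec : ∀ n, PP (k+1) n = ((k:ℝ)+2) * ∑ m ∈ Finset.Ioo 0 n, (g m + e m) := by
      intro n
      rw [Finset.mul_sum]
      apply Finset.sum_congr rfl
      intro m hm
      have hm1 : 0 < m := (Finset.mem_Ioo.mp hm).1
      have h := nAA k m
      have hm0 : (m:ℝ) ≠ 0 := Nat.cast_ne_zero.mpr hm1.ne'
      have hA : AA (k+1) m = ((k:ℝ)+2) * (PP k m / m) := by
        rw [← mul_div_assoc, eq_div_iff hm0]
        linarith [h]
      rw [hA]
      congr 1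
      simp only [he]
      ring
    have hee : e =o[atTop] g := by
      have h1 : (fun m : ℕ => (PP k m - (Real.log m)^(k+1)) * (1/(m:ℝ))) =o[atTop]
          (fun m : ℕ => (Real.log m)^(k+1) * (1/(m:ℝ))) :=
        IsLittleO.mul_isBigO ih.isLittleO (isBigO_refl (fun m : ℕ => 1/(m:ℝ)) atTop)
      have h2 : e = fun m : ℕ => (PP k m - (Real.log m)^(k+1)) * (1/(m:ℝ)) := by
        funext m
        simp only [he, hg]
        ring
      have h3 : g = fun m : ℕ => (Real.log m)^(k+1) * (1/(m:ℝ)) := by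
        funext m
        simp only [hg]
        ring
      rw [h2, h3]
      exact h1
    have hgequiv : (fun n : ℕ => ∑ m ∈ Finset.Ioo 0 n, g m) ~[atTop]
        (fun n : ℕ => (Real.log n)^(k+1+1)/((((k+1):ℕ):ℝ)+1)) := sum_flog_equiv (k+1)
    have hStend : Tendsto (fun n : ℕ => ∑ m ∈ Finset.Ioo 0 n, g m) atTop atTop :=
      hgequiv.symm.tendsto_atTop (tendsto_logpow (k+1))
    have hsum_littleo : (fun n : ℕ => ∑ m ∈ Finset.Ioo 0 n, e m) =o[atTop]
        (fun n : ℕ => ∑ m ∈ Finset.Ioo 0 n, g m) := sum_e_littleo e g hgnn hee hStend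
    have hadd : (fun n : ℕ => ∑ m ∈ Finset.Ioo 0 n, (g m + e m)) ~[atTop]
        (fun n : ℕ => ∑ m ∈ Finset.Ioo 0 n, g m) := by
      have hc : (fun n : ℕ => ∑ m ∈ Finset.Ioo 0 n, (g m + e m))
          = (fun n : ℕ => ∑ m ∈ Finset.Ioo 0 n, g m) + (fun n : ℕ => ∑ m ∈ Finset.Ioo 0 n, e m) := by
        funext n
        rw [Pi.add_apply, Finset.sum_add_distrib]
      rw [hc]
      exact IsEquivalent.add_isLittleO (IsEquivalent.refl) hsum_littleo
    have hfinal : (fun n : ℕ => PP (k+1) n)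
        = fun n : ℕ => ((k:ℝ)+2) * ∑ m ∈ Finset.Ioo 0 n, (g m + e m) := funext hrec
    rw [hfinal]
    have hmul : (fun n : ℕ => ((k:ℝ)+2) * ∑ m ∈ Finset.Ioo 0 n, (g m + e m)) ~[atTop]
        (fun n : ℕ => ((k:ℝ)+2) * ((Real.log n)^(k+1+1)/((((k+1):ℕ):ℝ)+1))) :=
      (IsEquivalent.refl (u := fun _ : ℕ => ((k:ℝ)+2))).mul (hadd.trans hgequiv)
    apply hmul.trans_eventuallyEq
    apply Filter.EventuallyEq.of_eq
    funext n
    have hcast : (((k+1):ℕ):ℝ) + 1 = (k:ℝ) + 2 := by push_cast; ring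
    rw [hcast]
    have hne : (k:ℝ) + 2 ≠ 0 := by positivity
    rw [mul_comm, div_mul_cancel₀ _ hne]

lemma AA_equiv (k : ℕ) :
    (fun n : ℕ => AA (k+1) n) ~[atTop] (fun n : ℕ => ((k:ℝ)+2) * (Real.log n)^(k+1) / n) := by
  have h1 : (fun n : ℕ => AA (k+1) n) =ᶠ[atTop]
      (fun n : ℕ => (((k:ℝ)+2) / n) * PP k n) := by
    filter_upwards [eventually_gt_atTop 0] with n hn
    have h := nAA k n
    have hn0 : (n:ℝ) ≠ 0 := Nat.cast_ne_zero.mpr hn.ne'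
    rw [div_mul_eq_mul_div, eq_div_iff hn0]
    linarith [h]
  have h2 : (fun n : ℕ => (((k:ℝ)+2)/n) * PP k n) ~[atTop]
      (fun n : ℕ => (((k:ℝ)+2)/n) * (Real.log n)^(k+1)) :=
    (IsEquivalent.refl (u := fun n : ℕ => ((k:ℝ)+2)/(n:ℝ))).mul (PP_equiv k)
  refine h1.trans_isEquivalent (h2.trans_eventuallyEq ?_)
  apply Filter.EventuallyEq.of_eq
  funext n
  ring

lemma log_ratio_littleo (k : ℕ) :
    (fun n : ℕ => (Real.log n)^k / n) =o[atTop] (fun n : ℕ => (Real.log n)^(k+1) / n) := by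
  have h1 : (fun _ : ℕ => (1:ℝ)) =o[atTop] (fun n : ℕ => Real.log n) := by
    rw [Asymptotics.isLittleO_const_left]
    right
    exact tendsto_abs_atTop_atTop.comp (Real.tendsto_log_atTop.comp tendsto_natCast_atTop_atTop)
  have h2 := h1.mul_isBigO (isBigO_refl (fun n : ℕ => (Real.log n)^k / n) atTop)
  apply h2.congr' <;> apply Filter.EventuallyEq.of_eq <;> funext n <;> ring

lemma AA_bigO (k : ℕ) : (fun n : ℕ => AA k n) =O[atTop] (fun n : ℕ => (Real.log n)^k / n) := by
  cases k with
  | zero =>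
    have h : (fun n : ℕ => AA 0 n) = (fun n : ℕ => (Real.log n)^0/(n:ℝ)) := by
      funext n; rw [AA_zero, pow_zero]
    rw [h]
  | succ k =>
    apply (AA_equiv k).isBigO.trans
    have h : (fun n : ℕ => ((k:ℝ)+2) * (Real.log n)^(k+1) / n)
        = fun n : ℕ => ((k:ℝ)+2) * ((Real.log n)^(k+1) / n) := by funext n; ring
    rw [h]
    exact isBigO_const_mul_self ((k:ℝ)+2) _ atTop

lemma AA_shift_littleo (k : ℕ) :
    (fun n : ℕ => AA k (n-1)) =o[atTop] (fun n : ℕ => (Real.log n)^(k+1) / n) := by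
  have hcomp : (fun n : ℕ => AA k (n-1)) =O[atTop]
      (fun n : ℕ => (Real.log ((n-1:ℕ)))^k / ((n-1:ℕ):ℝ)) :=
    (AA_bigO k).comp_tendsto (tendsto_sub_atTop_nat 1)
  have hb : (fun n : ℕ => (Real.log ((n-1:ℕ)))^k / ((n-1:ℕ):ℝ)) =O[atTop]
      (fun n : ℕ => (Real.log n)^k / n) := by
    rw [Asymptotics.isBigO_iff]
    refine ⟨2, ?_⟩
    filter_upwards [eventually_ge_atTop 2] with n hn
    have h2 : (1:ℝ) ≤ ((n-1:ℕ):ℝ) := by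
      have : 1 ≤ n - 1 := by omega
      exact_mod_cast this
    have hn2 : (2:ℝ) ≤ (n:ℝ) := by exact_mod_cast hn
    have hlogmono : Real.log ((n-1:ℕ)) ≤ Real.log n := by
      apply Real.log_le_log (by linarith)
      exact_mod_cast Nat.sub_le n 1
    have hlognn : 0 ≤ Real.log ((n-1:ℕ)) := Real.log_nonneg h2
    have hlognn' : 0 ≤ Real.log n := le_trans hlognn hlogmono
    have hpow : (Real.log ((n-1:ℕ)))^k ≤ (Real.log n)^k :=
      pow_le_pow_left₀ hlognn hlogmono k
    have hpownn : 0 ≤ (Real.log ((n-1:ℕ)))^k := pow_nonneg hlognn k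
    have hpownn' : 0 ≤ (Real.log n)^k := pow_nonneg hlognn' k
    have hn1 : (0:ℝ) < ((n-1:ℕ):ℝ) := by linarith
    have hnn : (0:ℝ) < (n:ℝ) := by linarith
    have hhalf : (n:ℝ) ≤ 2 * ((n-1:ℕ):ℝ) := by
      have : n ≤ 2 * (n-1) := by omega
      exact_mod_cast this
    rw [Real.norm_eq_abs, Real.norm_eq_abs, abs_of_nonneg (div_nonneg hpownn hn1.le),
      abs_of_nonneg (div_nonneg hpownn' hnn.le)]
    rw [show (2:ℝ) * ((Real.log n)^k / n) = (2 * (Real.log n)^k) / n by ring,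
      div_le_div_iff₀ hn1 hnn]
    nlinarith [hpow, hhalf, hpownn, hpownn']
  exact (hcomp.trans hb).trans_isLittleO (log_ratio_littleo k)

lemma FF_eq (r : ℕ) : ∀ n : ℕ, 2 ≤ n → FF r n = AA (r+1) n - AA r (n-1) := by
  induction r with
  | zero =>
    intro n hn
    rw [FF_zero]
    have hins : Finset.Ioo 0 n = insert 1 (Finset.Ioo 1 n) := by
      ext x; simp; omega
    have h1 : AA 1 n = (1/((1:ℕ):ℝ)) * (1/((n:ℝ) - ((1:ℕ):ℝ)))
        + ∑ m ∈ Finset.Ioo 1 n, AA 0 m * (1/((n:ℝ)-m)) := by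
      rw [AA_succ, hins, Finset.sum_insert (by simp)]
      rfl
    have h2 : ∑ m ∈ Finset.Ioo 1 n, AA 0 m * (1/((n:ℝ)-m))
        = ∑ m ∈ Finset.Ioo 1 n, (1/(m:ℝ)) * (1/((n:ℝ)-m)) :=
      Finset.sum_congr rfl fun m _ => by rw [AA_zero]
    have h3 : AA 0 (n-1) = 1/((n:ℝ) - 1) := by
      rw [AA_zero]
      congr 1
      rw [Nat.cast_sub (by omega : 1 ≤ n)]
      norm_num
    rw [h3, h1, h2]
    norm_num
  | succ r ih =>
    intro n hn
    rw [FF_succ]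
    have hsum : ∀ m ∈ Finset.Ioo 1 n, FF r m * (1/((n:ℝ)-m))
        = AA (r+1) m * (1/((n:ℝ)-m)) - AA r (m-1) * (1/((n:ℝ)-m)) := by
      intro m hm
      rw [Finset.mem_Ioo] at hm
      rw [ih m (by omega)]
      ring
    rw [Finset.sum_congr rfl hsum, Finset.sum_sub_distrib]
    have hfirst : ∑ m ∈ Finset.Ioo 1 n, AA (r+1) m * (1/((n:ℝ)-m)) = AA (r+2) n := by
      rw [show AA (r+2) n = ∑ m ∈ Finset.Ioo 0 n, AA (r+1) m * (1/((n:ℝ)-m)) from rfl]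
      have hins : Finset.Ioo 0 n = insert 1 (Finset.Ioo 1 n) := by
        ext x; simp; omega
      rw [hins, Finset.sum_insert (by simp), AA_succ_one]
      simp
    have hsecond : ∑ m ∈ Finset.Ioo 1 n, AA r (m-1) * (1/((n:ℝ)-m)) = AA (r+1) (n-1) := by
      rw [show AA (r+1) (n-1) = ∑ m ∈ Finset.Ioo 0 (n-1), AA r m * (1/(((n-1:ℕ):ℝ)-m)) from rfl]
      refine Finset.sum_nbij' (fun m => m - 1) (fun m => m + 1) ?_ ?_ ?_ ?_ ?_
      · intro m hm; simp only [Finset.mem_Ioo] at hm ⊢; omega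
      · intro m hm; simp only [Finset.mem_Ioo] at hm ⊢; omega
      · intro m hm; simp only [Finset.mem_Ioo] at hm; omega
      · intro m hm; simp only [Finset.mem_Ioo] at hm; omega
      · intro m hm
        simp only [Finset.mem_Ioo] at hm
        congr 2
        · rw [Nat.cast_sub (by omega : 1 ≤ n), Nat.cast_sub (by omega : 1 ≤ m)]
          ring
    rw [hfirst, hsecond]

open Classical in
/-- For fixed `r`, the sum over `1 < j₁ < ⋯ < j_{r+1} < n` of
`1/j₁ · 1/(j₂-j₁) ⋯ 1/(j_{r+1}-j_r) · 1/(n-j_{r+1})` is `~ (r+2)(ln n)^{r+1}/n`. -/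
theorem nested_sum_asymptotic (r : ℕ) :
    (fun n : ℕ =>
      ∑ j ∈ (Fintype.piFinset fun _ : Fin (r + 1) => Finset.Ioo 1 n).filter StrictMono,
        (1 / (j 0 : ℝ)) * (∏ i : Fin r, 1 / ((j i.succ : ℝ) - (j i.castSucc : ℝ)))
          * (1 / ((n : ℝ) - (j (Fin.last r) : ℝ))))
      ~[atTop]
    (fun n : ℕ => ((r : ℝ) + 2) * (Real.log n) ^ (r + 1) / (n : ℝ)) := by
  have hFF : (fun n : ℕ =>
      ∑ j ∈ (Fintype.piFinset fun _ : Fin (r + 1) => Finset.Ioo 1 n).filter StrictMono,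
        (1 / (j 0 : ℝ)) * (∏ i : Fin r, 1 / ((j i.succ : ℝ) - (j i.castSucc : ℝ)))
          * (1 / ((n : ℝ) - (j (Fin.last r) : ℝ)))) = fun n : ℕ => FF r n := rfl
  rw [hFF]
  have heq : (fun n : ℕ => FF r n) =ᶠ[atTop]
      ((fun n : ℕ => AA (r+1) n) - (fun n : ℕ => AA r (n-1))) := by
    filter_upwards [eventually_ge_atTop 2] with n hn
    rw [Pi.sub_apply]
    exact FF_eq r n hn
  apply heq.trans_isEquivalent
  have hO : (fun n : ℕ => (Real.log n)^(r+1)/(n:ℝ)) =O[atTop]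
      (fun n : ℕ => ((r:ℝ)+2) * (Real.log n)^(r+1)/(n:ℝ)) := by
    have h := isBigO_self_const_mul (c := (r:ℝ)+2) (by positivity)
      (fun n : ℕ => (Real.log n)^(r+1)/(n:ℝ)) atTop
    apply h.congr' Filter.EventuallyEq.rfl
    apply Filter.EventuallyEq.of_eq
    funext n
    ring
  exact (AA_equiv r).sub_isLittleO ((AA_shift_littleo r).trans_isBigO hO)
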